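/- arXiv:2008.07233 — 2 statements merged into one kernel-verified Lean document; each statement's English description precedes it below -/
import Mathlib

section
/- Let M = M(Σ,I) be a trace monoid on a finite alphabet Σ, and let u ∈ M. Then any left divisor x ≤ u is uniquely determined by its image in the free commutative monoid on Σ, i.e., by the tuple of occurrence counts (n_a)_{a∈Σ} where n_a is the number of occurrences of the letter a in x. -/
open scoped Classical

section TracePre

variable {A : Type*}

/-- The elementary swap relation from an independence relation. -/
def swapRel (I : A → A → Prop) : FreeMonoid A → FreeMonoid A → Prop :=
  fun x y => ∃ a b, I a b ∧ x = FreeMonoid.of a * FreeMonoid.of b ∧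
    y = FreeMonoid.of b * FreeMonoid.of a

/-- The congruence generated by the commutations. -/
def traceCon (I : A → A → Prop) : Con (FreeMonoid A) := conGen (swapRel I)

/-- The trace monoid `M(A, I)`. -/
abbrev TraceMonoid (A : Type*) (I : A → A → Prop) := (traceCon I).Quotient

/-- Image of a letter in the trace monoid. -/
def trOf (I : A → A → Prop) (a : A) : TraceMonoid A I := (traceCon I).mk' (FreeMonoid.of a)

theorem traceCon_le_ker {M : Type*} [CommMonoid M] {I : A → A → Prop}
    (φ : FreeMonoid A →* M) : traceCon I ≤ Con.ker φ := by
  refine Con.conGen_le.2 fun x y h => ?_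
  obtain ⟨a, b, _, rfl, rfl⟩ := h
  simp [Con.ker_rel, map_mul, mul_comm]

/-- Length of a trace. -/
noncomputable def trLen {I : A → A → Prop} (x : TraceMonoid A I) : ℕ :=
  Multiplicative.toAdd
    ((Con.lift (traceCon I) (FreeMonoid.lift fun _ => Multiplicative.ofAdd (1 : ℕ))
      (traceCon_le_ker _)) x)

/-- Number of occurrences of the letter `a` in a trace. -/
noncomputable def trCount {I : A → A → Prop} (a : A) (x : TraceMonoid A I) : ℕ :=
  Multiplicative.toAdd
    ((Con.lift (traceCon I)
      (FreeMonoid.lift fun b => Multiplicative.ofAdd (if b = a then (1 : ℕ) else 0))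
      (traceCon_le_ker _)) x)

/-- Lists of pairwise distinct, pairwise independent letters. -/
def IsCliqueList (I : A → A → Prop) (l : List A) : Prop :=
  l.Pairwise fun a b => a ≠ b ∧ I a b

/-- The trace associated with a list of letters. -/
def listProd (I : A → A → Prop) (l : List A) : TraceMonoid A I := (l.map (trOf I)).prod

/-- A clique of the trace monoid. -/
def IsClique (I : A → A → Prop) (x : TraceMonoid A I) : Prop :=
  ∃ l, IsCliqueList I l ∧ x = listProd I l

/-- The trace associated with a finite set of letters. -/
noncomputable def fprod (I : A → A → Prop) (c : Finset A) : TraceMonoid A I :=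
  listProd I c.toList

/-- Normal pairs of cliques, cliques being represented by finite sets of letters. -/
def NormalF (I : A → A → Prop) (c d : Finset A) : Prop :=
  ∀ b ∈ d, ∃ a ∈ c, (¬ I a b ∨ a = b)

/-- Greatest lower bound for left divisibility. -/
def IsGlbDvd {M : Type*} [Monoid M] (x y g : M) : Prop :=
  g ∣ x ∧ g ∣ y ∧ ∀ w, w ∣ x → w ∣ y → w ∣ g

/-- Least upper bound for left divisibility. -/
def IsLubDvd {M : Type*} [Monoid M] (x y z : M) : Prop :=
  x ∣ z ∧ y ∣ z ∧ ∀ w, x ∣ w → y ∣ w → z ∣ w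

end TracePre

section CSPre

variable {A X : Type*}

/-- A concurrent system: a right action of a trace monoid on `X ∪ {⊥}`,
`⊥` being encoded by `none`. -/
structure CS (A : Type*) (I : A → A → Prop) (X : Type*) where
  act : Option X → TraceMonoid A I → Option X
  act_one : ∀ s, act s 1 = s
  act_mul : ∀ s x y, act s (x * y) = act (act s x) y
  act_bot : ∀ x, act none x = none

variable {I : A → A → Prop}

/-- The letter `a` is enabled at state `α`. -/
def CS.Enabled (S : CS A I X) (α : X) (a : A) : Prop := S.act (some α) (trOf I a) ≠ none

/-- The set of executions starting from `α`. -/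
def CS.MSet (S : CS A I X) (α : X) : Set (TraceMonoid A I) :=
  {x | S.act (some α) x ≠ none}

/-- A deterministic concurrent system: any two letters enabled at a common state
commute. -/
def CS.Deterministic (S : CS A I X) : Prop :=
  ∀ (α : X) (a b : A), a ≠ b → S.Enabled α a → S.Enabled α b → I a b

/-- The finite set of letters enabled at an extended state. -/
noncomputable def CS.enabledFinset [Fintype A] (S : CS A I X) (s : Option X) : Finset A :=
  Finset.univ.filter fun a => S.act s (trOf I a) ≠ none

/-- A generalised execution from `α`, as an infinite normal sequence of cliques
all of whose finite prefixes are executions. -/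
def CS.IsGenExec (S : CS A I X) (α : X) (c : ℕ → Finset A) : Prop :=
  (∀ i, (↑(c i) : Set A).Pairwise I) ∧ (∀ i, NormalF I (c i) (c (i + 1))) ∧
    ∀ k, S.act (some α) (((List.range k).map fun i => fprod I (c i)).prod) ≠ none

/-- An infinite execution from `α`: a generalised execution with all cliques nonempty. -/
def CS.IsInfExec (S : CS A I X) (α : X) (c : ℕ → Finset A) : Prop :=
  S.IsGenExec α c ∧ ∀ i, c i ≠ ∅

end CSPre

section Aux

open Relation FreeMonoid

variable {A : Type*} {I : A → A → Prop}

/-- Structural single-swap relation on lists. -/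
inductive TStep (I : A → A → Prop) : List A → List A → Prop
  | swap (a b : A) (l : List A) : I a b → TStep I (a :: b :: l) (b :: a :: l)
  | cons (c : A) {l l' : List A} : TStep I l l' → TStep I (c :: l) (c :: l')

lemma TStep.append_right {l l' : List A} (h : TStep I l l') (s : List A) :
    TStep I (l ++ s) (l' ++ s) := by
  induction h with
  | swap a b t hI => exact .swap a b (t ++ s) hI
  | cons c _ ih => exact .cons c ih

lemma TStep.symm (hsym : Symmetric I) {l l' : List A} (h : TStep I l l') : TStep I l' l := by
  induction h with
  | swap a b t hI => exact .swap b a t (hsym hI)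
  | cons c _ ih => exact .cons c ih

lemma chain_cons (c : A) {l l' : List A} (h : ReflTransGen (TStep I) l l') :
    ReflTransGen (TStep I) (c :: l) (c :: l') :=
  h.lift (c :: ·) fun _ _ hs => TStep.cons c hs

lemma chain_append_left (p : List A) {l l' : List A} (h : ReflTransGen (TStep I) l l') :
    ReflTransGen (TStep I) (p ++ l) (p ++ l') := by
  induction p with
  | nil => exact h
  | cons c p ih => exact chain_cons c ih

lemma chain_append_right {l l' : List A} (h : ReflTransGen (TStep I) l l') (s : List A) :
    ReflTransGen (TStep I) (l ++ s) (l' ++ s) :=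
  h.lift (· ++ s) fun _ _ hs => hs.append_right s

lemma tstep_traceCon {l l' : List A} (h : TStep I l l') :
    traceCon I (ofList l) (ofList l') := by
  induction h with
  | swap a b t hI =>
    have h0 : traceCon I (FreeMonoid.of a * FreeMonoid.of b)
        (FreeMonoid.of b * FreeMonoid.of a) :=
      ConGen.Rel.of _ _ ⟨a, b, hI, rfl, rfl⟩
    have := (traceCon I).mul h0 ((traceCon I).refl (ofList t))
    simpa [ofList_cons, mul_assoc] using this
  | cons c _ ih =>
    simpa [ofList_cons] using (traceCon I).mul ((traceCon I).refl (FreeMonoid.of c)) ih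

lemma chain_traceCon {l l' : List A} (h : ReflTransGen (TStep I) l l') :
    traceCon I (ofList l) (ofList l') := by
  induction h with
  | refl => exact (traceCon I).refl _
  | tail _ hs ih => exact (traceCon I).trans ih (tstep_traceCon hs)

lemma traceCon_chain (hsym : Symmetric I) {x y : FreeMonoid A} (h : traceCon I x y) :
    ReflTransGen (TStep I) (toList x) (toList y) := by
  have hsymm : Symmetric (ReflTransGen (TStep I)) :=
    (@ReflTransGen.stdSymm _ _ ⟨fun _ _ hs => hs.symm hsym⟩).symm
  induction h with
  | of x y hr =>
    obtain ⟨a, b, hI, rfl, rfl⟩ := hr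
    exact ReflTransGen.single (TStep.swap a b [] hI)
  | refl x => exact .refl
  | symm _ ih => exact hsymm ih
  | trans _ _ ih1 ih2 => exact ih1.trans ih2
  | mul _ _ ih1 ih2 =>
    rw [toList_mul, toList_mul]
    exact (chain_append_right ih1 _).trans (chain_append_left _ ih2)

/-- One-step version of the key decomposition lemma. -/
lemma stepA (a : A) {v v' : List A} (h : TStep I v v') :
    ∀ v1 v2 : List A, v = v1 ++ a :: v2 → (∀ b ∈ v1, I a b) →
    ∃ w1 w2 : List A, v' = w1 ++ a :: w2 ∧ (∀ b ∈ w1, I a b) ∧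
      ReflTransGen (TStep I) (v1 ++ v2) (w1 ++ w2) := by
  induction h with
  | swap c d l hI =>
    rintro (_ | ⟨e, (_ | ⟨f, t⟩)⟩) v2 hv hv1
    · -- v1 = [] : a = c
      simp only [List.nil_append, List.cons.injEq] at hv
      obtain ⟨rfl, rfl⟩ := hv
      refine ⟨[d], l, by simp, ?_, .refl⟩
      intro b hb; simp at hb; subst hb; exact hI
    · -- v1 = [e] : e = c, a = d
      simp only [List.cons_append, List.nil_append, List.cons.injEq] at hv
      obtain ⟨rfl, rfl, rfl⟩ := hv
      refine ⟨[], _, rfl, by simp, ?_⟩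
      exact .refl
    · -- v1 = e :: f :: t
      simp only [List.cons_append, List.cons.injEq] at hv
      obtain ⟨rfl, rfl, rfl⟩ := hv
      refine ⟨d :: c :: t, v2, by simp, ?_, ?_⟩
      · intro b hb
        simp only [List.mem_cons] at hb
        rcases hb with rfl | rfl | hb
        · exact hv1 b (by simp)
        · exact hv1 b (by simp)
        · exact hv1 b (by simp [hb])
      · exact ReflTransGen.single (by simpa using TStep.swap c d (t ++ v2) hI)
  | cons c hstep ih =>
    rintro (_ | ⟨e, t⟩) v2 hv hv1
    · -- v1 = [] : a = c
      simp only [List.nil_append, List.cons.injEq] at hv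
      obtain ⟨rfl, rfl⟩ := hv
      exact ⟨[], _, rfl, by simp, ReflTransGen.single hstep⟩
    · -- v1 = e :: t : e = c
      simp only [List.cons_append, List.cons.injEq] at hv
      obtain ⟨rfl, rfl⟩ := hv
      obtain ⟨w1, w2, rfl, hw1, hch⟩ :=
        ih t v2 rfl fun b hb => hv1 b (List.mem_cons_of_mem _ hb)
      exact ⟨c :: w1, w2, rfl, fun b hb => by
        rcases List.mem_cons.1 hb with rfl | hb
        · exact hv1 b (by simp)
        · exact hw1 b hb,
        by simpa using chain_cons c hch⟩

/-- Chain version of the key decomposition lemma. -/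
lemma chainA (a : A) {w v : List A} (h : ReflTransGen (TStep I) (a :: w) v) :
    ∃ v1 v2 : List A, v = v1 ++ a :: v2 ∧ (∀ b ∈ v1, I a b) ∧
      ReflTransGen (TStep I) w (v1 ++ v2) := by
  induction h with
  | refl => exact ⟨[], w, rfl, by simp, .refl⟩
  | tail _ hstep ih =>
    obtain ⟨v1, v2, rfl, hv1, hch⟩ := ih
    obtain ⟨w1, w2, rfl, hw1, hch'⟩ := stepA a hstep v1 v2 rfl hv1
    exact ⟨w1, w2, rfl, hw1, hch.trans hch'⟩

lemma chain_shift (hsym : Symmetric I) (a : A) (l r : List A) (h : ∀ b ∈ l, I a b) :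
    ReflTransGen (TStep I) (l ++ a :: r) (a :: (l ++ r)) := by
  induction l with
  | nil => exact .refl
  | cons c t ih =>
    have h1 : ReflTransGen (TStep I) (c :: (t ++ a :: r)) (c :: a :: (t ++ r)) :=
      chain_cons c (ih fun b hb => h b (List.mem_cons_of_mem _ hb))
    exact h1.tail (TStep.swap c a (t ++ r) (hsym (h c (by simp))))

end Aux

section Glue

open Relation FreeMonoid

variable {A : Type*} {I : A → A → Prop}

lemma trace_eq_iff {x y : FreeMonoid A} :
    (traceCon I).mk' x = (traceCon I).mk' y ↔ traceCon I x y := by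
  exact (traceCon I).eq

lemma trCount_mul (a : A) (x y : TraceMonoid A I) :
    trCount a (x * y) = trCount a x + trCount a y := by
  unfold trCount; rw [map_mul, toAdd_mul]

lemma trCount_one (a : A) : trCount a (1 : TraceMonoid A I) = 0 := by
  unfold trCount; rw [map_one, toAdd_one]

lemma trCount_of (a b : A) : trCount a (trOf I b) = if b = a then 1 else 0 := by
  unfold trCount trOf
  rw [Con.lift_mk', FreeMonoid.lift_eval_of, toAdd_ofAdd]

lemma trLen_mul (x y : TraceMonoid A I) : trLen (x * y) = trLen x + trLen y := by
  unfold trLen; rw [map_mul, toAdd_mul]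

lemma trLen_of (a : A) : trLen (trOf I a) = 1 := by
  unfold trLen trOf
  rw [Con.lift_mk', FreeMonoid.lift_eval_of, toAdd_ofAdd]

lemma mem_of_trCount_ne (a : A) :
    ∀ l : List A, trCount a ((traceCon I).mk' (ofList l)) ≠ 0 → a ∈ l := by
  intro l
  induction l with
  | nil => intro h; exact absurd (by rw [ofList_nil, map_one, trCount_one]) h
  | cons c t ih =>
    intro h
    rw [ofList_cons, map_mul, trCount_mul] at h
    by_cases hca : c = a
    · exact hca ▸ List.mem_cons_self (a := c) (l := t)
    · refine List.mem_cons_of_mem c (ih ?_)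
      have : trCount a ((traceCon I).mk' (FreeMonoid.of c)) = 0 := by
        have := trCount_of (I := I) a c
        rw [if_neg hca] at this; exact this
      omega

lemma trace_cases (x : TraceMonoid A I) :
    x = 1 ∨ ∃ a x', x = trOf I a * x' := by
  obtain ⟨w, rfl⟩ := Con.mk'_surjective x
  rcases hw : toList w with _ | ⟨a, t⟩
  · left
    have hw1 : w = ofList [] := by rw [← hw, ofList_toList]
    rw [hw1, ofList_nil, map_one]
  · right
    refine ⟨a, (traceCon I).mk' (ofList t), ?_⟩
    have hw1 : w = ofList (a :: t) := by rw [← hw, ofList_toList]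
    rw [hw1, ofList_cons, map_mul]; rfl

lemma trace_cancel (hsym : Symmetric I) (hirr : Irreflexive I) {a : A}
    {x y : TraceMonoid A I} (h : trOf I a * x = trOf I a * y) : x = y := by
  obtain ⟨w, rfl⟩ := Con.mk'_surjective x
  obtain ⟨v, rfl⟩ := Con.mk'_surjective y
  have hcon : traceCon I (FreeMonoid.of a * w) (FreeMonoid.of a * v) := by
    apply trace_eq_iff.mp
    rw [map_mul, map_mul]; exact h
  have hch : ReflTransGen (TStep I) (a :: toList w) (a :: toList v) := by
    simpa [toList_mul] using traceCon_chain hsym hcon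
  obtain ⟨v1, v2, hdec, hv1, hchain⟩ := chainA a hch
  rcases v1 with _ | ⟨c, t⟩
  · simp only [List.nil_append, List.cons.injEq] at hdec
    apply trace_eq_iff.mpr
    have := chain_traceCon (l := toList w) (l' := toList v) (hdec.2 ▸ hchain)
    simpa [ofList_toList] using this
  · exfalso
    have hc : c = a := by
      have := congrArg (List.head? ·) hdec
      simp at this
      exact this.symm

    exact hirr a (hc ▸ hv1 c (by simp))

lemma prefix_helper (a : A) :
    ∀ (p w s q : List A), w ++ s = p ++ a :: q → a ∈ w → a ∉ p →
      ∃ r, w = p ++ a :: r := by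
  intro p
  induction p with
  | nil =>
    rintro (_ | ⟨c, w'⟩) s q heq hmem _
    · simp at hmem
    · simp only [List.cons_append, List.nil_append, List.cons.injEq] at heq
      exact ⟨w', by simp [heq.1]⟩
  | cons d p' ih =>
    rintro (_ | ⟨c, w'⟩) s q heq hmem hnp
    · simp at hmem
    · simp only [List.cons_append, List.cons.injEq] at heq
      obtain ⟨rfl, heq⟩ := heq
      have hne : a ≠ c := fun h => hnp (by simp [h])
      have hmem' : a ∈ w' := by
        rcases List.mem_cons.1 hmem with h | h
        · exact absurd h hne
        · exact h
      obtain ⟨r, hr⟩ := ih w' s q heq hmem' fun h => hnp (List.mem_cons_of_mem _ h)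
      exact ⟨r, by rw [hr]; simp⟩

lemma letter_dvd (hsym : Symmetric I) (hirr : Irreflexive I) {a : A}
    {u y : TraceMonoid A I} (hau : trOf I a ∣ u) (hyu : y ∣ u)
    (hc : trCount a y ≠ 0) : trOf I a ∣ y := by
  obtain ⟨t, rfl⟩ := hyu
  obtain ⟨wy, rfl⟩ := Con.mk'_surjective y
  obtain ⟨wt, rfl⟩ := Con.mk'_surjective t
  obtain ⟨s, hs⟩ := hau
  obtain ⟨ws, rfl⟩ := Con.mk'_surjective s
  have hcon : traceCon I (FreeMonoid.of a * ws) (wy * wt) := by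
    apply trace_eq_iff.mp
    rw [map_mul, map_mul]
    exact hs.symm
  have hch : ReflTransGen (TStep I) (a :: toList ws) (toList wy ++ toList wt) := by
    simpa [toList_mul] using traceCon_chain hsym hcon
  obtain ⟨v1, v2, hdec, hv1, _⟩ := chainA a hch
  have hmem : a ∈ toList wy := by
    apply mem_of_trCount_ne a
    rw [ofList_toList]; exact hc
  have hnv1 : a ∉ v1 := fun hmem1 => hirr a (hv1 a hmem1)
  obtain ⟨r, hr⟩ := prefix_helper a v1 (toList wy) (toList wt) v2 hdec hmem hnv1
  have hsh : ReflTransGen (TStep I) (v1 ++ a :: r) (a :: (v1 ++ r)) :=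
    chain_shift hsym a v1 r hv1
  have hcon2 : traceCon I wy (ofList (a :: (v1 ++ r))) := by
    have := chain_traceCon (hr ▸ hsh : ReflTransGen (TStep I) (toList wy) (a :: (v1 ++ r)))
    simpa [ofList_toList] using this
  refine ⟨(traceCon I).mk' (ofList (v1 ++ r)), ?_⟩
  calc (traceCon I).mk' wy = (traceCon I).mk' (ofList (a :: (v1 ++ r))) :=
        trace_eq_iff.mpr hcon2
    _ = trOf I a * (traceCon I).mk' (ofList (v1 ++ r)) := by
        rw [ofList_cons, map_mul]; rfl

lemma eq_one_of_counts {y : TraceMonoid A I} (h : ∀ a, trCount a y = 0) : y = 1 := by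
  rcases trace_cases y with rfl | ⟨a, y', rfl⟩
  · rfl
  · exfalso
    have := h a
    rw [trCount_mul, trCount_of, if_pos rfl] at this
    omega

lemma main_aux (hsym : Symmetric I) (hirr : Irreflexive I) :
    ∀ n (u x y : TraceMonoid A I), trLen x ≤ n → x ∣ u → y ∣ u →
      (∀ a, trCount a x = trCount a y) → x = y := by
  intro n
  induction n with
  | zero =>
    intro u x y hlen hx hy hcount
    rcases trace_cases x with rfl | ⟨a, x', rfl⟩
    · symm
      apply eq_one_of_counts
      intro b; rw [← hcount b, trCount_one]
    · exfalso; rw [trLen_mul, trLen_of] at hlen; omega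
  | succ n ih =>
    intro u x y hlen hx hy hcount
    rcases trace_cases x with rfl | ⟨a, x', rfl⟩
    · symm
      apply eq_one_of_counts
      intro b; rw [← hcount b, trCount_one]
    · have hca : trCount a (trOf I a * x') ≠ 0 := by
        rw [trCount_mul, trCount_of, if_pos rfl]; omega
      have hcy : trCount a y ≠ 0 := by rw [← hcount]; exact hca
      have hau : trOf I a ∣ u := dvd_trans ⟨x', rfl⟩ hx
      obtain ⟨y', rfl⟩ := letter_dvd hsym hirr hau hy hcy
      obtain ⟨u', rfl⟩ := hau
      obtain ⟨z, hz⟩ := hx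
      have hx' : x' ∣ u' := by
        refine ⟨z, trace_cancel (a := a) hsym hirr ?_⟩
        rw [hz, mul_assoc]
      obtain ⟨z', hz'⟩ := hy
      have hy' : y' ∣ u' := by
        refine ⟨z', trace_cancel (a := a) hsym hirr ?_⟩
        rw [hz', mul_assoc]
      have hcount' : ∀ b, trCount b x' = trCount b y' := by
        intro b
        have := hcount b
        rw [trCount_mul, trCount_mul] at this
        omega
      have hlen' : trLen x' ≤ n := by
        rw [trLen_mul, trLen_of] at hlen; omega
      rw [ih u' x' y' hlen' hx' hy' hcount']

end Glue

/-- a left divisor `x` of a trace `u` is uniquely determined by its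
occurrence counts `(trCount a x)_{a ∈ Σ}`, i.e. by its image in the free
commutative monoid on `Σ`. -/
theorem stmt1 {A : Type*} [Fintype A] {I : A → A → Prop}
    (hsym : Symmetric I) (hirr : Irreflexive I)
    (u x y : TraceMonoid A I) (hx : x ∣ u) (hy : y ∣ u)
    (hcount : ∀ a : A, trCount a x = trCount a y) :
    x = y := by
  exact main_aux hsym hirr (trLen x) u x y le_rfl hx hy hcount
end

section
/- Let M = M(Σ,I) be a trace monoid with Σ nonempty. The Möbius polynomial μ(z) = Σ_{c ∈ 𝒞} (−1)^{|c|} z^{|c|} (sum over all cliques c, including the empty clique) satisfies: μ(z) has a root of modulus smaller than or equal to 1; moreover, the smallest positive real root r of μ satisfies r ≥ 1 if and only if M is commutative (i.e., I = (Σ×Σ)∖Δ where Δ is the diagonal). -/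
open scoped Classical

section MuAux

variable {A : Type*} [Fintype A] [DecidableEq A] {I : A → A → Prop}

noncomputable def muF (I : A → A → Prop) (t : ℝ) (B : Finset A) : ℝ :=
  ∑ c ∈ B.powerset, if (↑c : Set A).Pairwise I then (-1 : ℝ) ^ c.card * t ^ c.card else 0

theorem muF_continuous (B : Finset A) : Continuous fun t : ℝ => muF I t B := by
  unfold muF
  apply continuous_finset_sum
  intro c _
  by_cases h : (↑c : Set A).Pairwise I
  · simp only [if_pos h]; exact continuous_const.mul (continuous_pow _)
  · simp only [if_neg h]; exact continuous_const

theorem muF_empty (t : ℝ) : muF I t (∅ : Finset A) = 1 := by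
  simp [muF]

theorem muF_insert (hsym : Symmetric I) {x : A} {B : Finset A} (hx : x ∉ B) (t : ℝ) :
    muF I t (insert x B) = muF I t B - t * muF I t (B.filter fun y => I x y) := by
  unfold muF
  rw [Finset.sum_powerset_insert hx]
  have hsub : (B.filter fun y => I x y).powerset ⊆ B.powerset :=
    Finset.powerset_mono.mpr (Finset.filter_subset _ B)
  have h2 : ∑ c ∈ B.powerset,
      (if (↑(insert x c) : Set A).Pairwise I then (-1 : ℝ) ^ (insert x c).card * t ^ (insert x c).card else 0)
      = -t * ∑ c ∈ (B.filter fun y => I x y).powerset,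
        (if (↑c : Set A).Pairwise I then (-1 : ℝ) ^ c.card * t ^ c.card else 0) := by
    rw [Finset.mul_sum]
    rw [← Finset.sum_subset hsub (f := fun c : Finset A =>
      if (↑(insert x c) : Set A).Pairwise I then (-1 : ℝ) ^ (insert x c).card * t ^ (insert x c).card else 0)]
    · apply Finset.sum_congr rfl
      intro c hc
      rw [Finset.mem_powerset] at hc
      have hcB : c ⊆ B := hc.trans (Finset.filter_subset _ B)
      have hxc : x ∉ c := fun h => hx (hcB h)
      have hcard : (insert x c).card = c.card + 1 := Finset.card_insert_of_notMem hxc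
      have hiff : (↑(insert x c) : Set A).Pairwise I ↔ (↑c : Set A).Pairwise I := by
        haveI : Std.Symm I := ⟨fun _ _ h => hsym h⟩
        rw [Finset.coe_insert, Set.pairwise_insert_of_symm]
        constructor
        · exact fun h => h.1
        · intro h
          refine ⟨h, fun b hb _ => ?_⟩
          exact (Finset.mem_filter.mp (hc hb)).2
      by_cases hcl : (↑c : Set A).Pairwise I
      · rw [if_pos (hiff.mpr hcl), if_pos hcl, hcard]
        ring
      · rw [if_neg (fun h => hcl (hiff.mp h)), if_neg hcl, mul_zero]
    · intro c hc hc'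
      rw [Finset.mem_powerset] at hc
      by_cases hcl : (↑(insert x c) : Set A).Pairwise I
      · exfalso
        apply hc'
        rw [Finset.mem_powerset]
        intro y hy
        rw [Finset.mem_filter]
        refine ⟨hc hy, ?_⟩
        have hxy : x ≠ y := fun h => hx (h ▸ hc hy)
        exact hcl (by simp) (by simp [hy]) hxy
      · exact if_neg hcl
  rw [h2]; ring

theorem muF_at_zero (B : Finset A) : muF I 0 B = 1 := by
  unfold muF
  rw [Finset.sum_eq_single (∅ : Finset A)]
  · simp
  · intro c _ hc
    have : c.card ≠ 0 := fun h => hc (Finset.card_eq_zero.mp h)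
    simp [zero_pow this]
  · intro h
    exact absurd (Finset.empty_mem_powerset B) h

theorem muF_insert_le (hsym : Symmetric I) {t : ℝ} (ht : 0 ≤ t)
    (h : ∀ C : Finset A, 0 ≤ muF I t C) (x : A) (B : Finset A) :
    muF I t (insert x B) ≤ muF I t B := by
  by_cases hx : x ∈ B
  · rw [Finset.insert_eq_self.mpr hx]
  · rw [muF_insert hsym hx]
    have := mul_nonneg ht (h (B.filter fun y => I x y))
    linarith

theorem muF_mono (hsym : Symmetric I) {t : ℝ} (ht : 0 ≤ t)
    (h : ∀ C : Finset A, 0 ≤ muF I t C) {B D : Finset A} (hBD : B ⊆ D) :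
    muF I t D ≤ muF I t B := by
  have key : ∀ E B' : Finset A, muF I t (B' ∪ E) ≤ muF I t B' := by
    intro E
    induction E using Finset.induction_on with
    | empty => intro B'; rw [Finset.union_empty]
    | insert _ _ hxE ih =>
      intro B'
      rw [Finset.union_insert]
      exact le_trans (muF_insert_le hsym ht h _ _) (ih B')
  have := key D B
  rwa [Finset.union_eq_right.mpr hBD] at this

theorem muF_pair (hsym : Symmetric I) {t : ℝ} {a b : A} (hab : a ≠ b) (hnI : ¬ I a b) :
    muF I t ({a, b} : Finset A) = 1 - 2 * t := by
  have hb : muF I t ({b} : Finset A) = 1 - t := by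
    have : ({b} : Finset A) = insert b ∅ := rfl
    rw [this, muF_insert hsym (Finset.notMem_empty b), Finset.filter_empty, muF_empty]
    ring
  have ha : a ∉ ({b} : Finset A) := by simp [hab]
  have hfil : ({b} : Finset A).filter (fun y => I a y) = ∅ := by
    rw [Finset.filter_singleton, if_neg hnI]
  rw [show ({a, b} : Finset A) = insert a {b} from rfl, muF_insert hsym ha, hfil, muF_empty, hb]
  ring

theorem muF_root (hsym : Symmetric I) {a b : A} (hab : a ≠ b) (hnI : ¬ I a b) :
    ∃ t : ℝ, 0 < t ∧ t ≤ 1 / 2 ∧ muF I t Finset.univ = 0 := by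
  set S : Set ℝ := {t | 0 ≤ t ∧ ∀ s, 0 ≤ s → s ≤ t → ∀ C : Finset A, 0 ≤ muF I s C} with hS
  have hS0 : (0 : ℝ) ∈ S := by
    refine ⟨le_refl 0, fun s hs hs' C => ?_⟩
    have : s = 0 := le_antisymm hs' hs
    rw [this, muF_at_zero]; norm_num
  have hSnon : S.Nonempty := ⟨0, hS0⟩
  have hbdd : ∀ t ∈ S, t ≤ 1 / 2 := by
    intro t ht
    have := ht.2 t ht.1 le_rfl ({a, b} : Finset A)
    rw [muF_pair hsym hab hnI] at this
    linarith
  have hBdd : BddAbove S := ⟨1 / 2, hbdd⟩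
  set T := sSup S with hT
  have hT0 : 0 ≤ T := le_csSup hBdd hS0
  have hThalf : T ≤ 1 / 2 := csSup_le hSnon hbdd
  have hUopen : IsOpen {t : ℝ | ∀ C : Finset A, 0 < muF I t C} := by
    have : {t : ℝ | ∀ C : Finset A, 0 < muF I t C} =
        ⋂ C : Finset A, {t : ℝ | 0 < muF I t C} := by
      ext t; simp
    rw [this]
    exact isOpen_iInter_of_finite fun C =>
      isOpen_lt continuous_const (muF_continuous C)
  -- T is positive
  have hTpos : 0 < T := by
    have h0U : (0 : ℝ) ∈ {t : ℝ | ∀ C : Finset A, 0 < muF I t C} := by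
      intro C; rw [muF_at_zero]; norm_num
    obtain ⟨ε, hε, hball⟩ := Metric.isOpen_iff.mp hUopen 0 h0U
    have hδ : ε / 2 ∈ S := by
      refine ⟨by linarith, fun s hs hsle C => ?_⟩
      have : dist s 0 < ε := by
        rw [Real.dist_eq, sub_zero, abs_of_nonneg hs]; linarith
      exact (hball this C).le
    linarith [le_csSup hBdd hδ]
  -- all values nonnegative on [0, T)
  have hlt : ∀ s, 0 ≤ s → s < T → ∀ C : Finset A, 0 ≤ muF I s C := by
    intro s hs hsT C
    obtain ⟨u, huS, hsu⟩ := exists_lt_of_lt_csSup hSnon hsT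
    exact huS.2 s hs hsu.le C
  -- all values nonnegative at T
  have hTval : ∀ C : Finset A, 0 ≤ muF I T C := by
    intro C
    by_contra hneg
    push_neg at hneg
    have hop : IsOpen {t : ℝ | muF I t C < 0} :=
      isOpen_lt (muF_continuous C) continuous_const
    obtain ⟨ε, hε, hball⟩ := Metric.isOpen_iff.mp hop T hneg
    set s := max 0 (T - ε / 2) with hsdef
    have hs0 : 0 ≤ s := le_max_left _ _
    have hsT : s < T := max_lt hTpos (by linarith)
    have hsd : dist s T < ε := by
      rw [Real.dist_eq, abs_of_nonpos (by linarith)]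
      have : T - ε / 2 ≤ s := le_max_right _ _
      linarith
    exact absurd (hlt s hs0 hsT C) (not_le.mpr (hball hsd))
  -- some subset vanishes at T
  have hexC : ∃ C0 : Finset A, muF I T C0 = 0 := by
    by_contra hno
    push_neg at hno
    have hTU : T ∈ {t : ℝ | ∀ C : Finset A, 0 < muF I t C} :=
      fun C => lt_of_le_of_ne (hTval C) (Ne.symm (hno C))
    obtain ⟨ε, hε, hball⟩ := Metric.isOpen_iff.mp hUopen T hTU
    have hmem : T + ε / 2 ∈ S := by
      refine ⟨by linarith, fun s hs hsle C => ?_⟩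
      rcases lt_or_ge s T with h | h
      · exact hlt s hs h C
      · rcases eq_or_lt_of_le h with h' | h'
        · rw [← h']; exact hTval C
        · refine (hball ?_ C).le
          show dist s T < ε
          rw [Real.dist_eq, abs_of_nonneg (by linarith)]
          linarith
    linarith [le_csSup hBdd hmem]
  obtain ⟨C0, hC0⟩ := hexC
  refine ⟨T, hTpos, hThalf, le_antisymm ?_ (hTval _)⟩
  calc muF I T Finset.univ ≤ muF I T C0 :=
        muF_mono hsym hT0 hTval (Finset.subset_univ C0)
    _ = 0 := hC0

end MuAux


/-- the Möbius polynomial of a trace monoid on a nonempty alphabet has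
a (complex) root of modulus at most 1, and its smallest positive real root `r`
satisfies `r ≥ 1` iff the monoid is commutative, i.e. `I` relates all pairs of
distinct letters. -/
theorem stmt6 {A : Type*} [Fintype A] [DecidableEq A] [Nonempty A] {I : A → A → Prop}
    (hsym : Symmetric I) (hirr : Irreflexive I)
    (μR : ℝ → ℝ)
    (hμR : ∀ z, μR z = ∑ c : Finset A,
      if (↑c : Set A).Pairwise I then (-1 : ℝ) ^ c.card * z ^ c.card else 0)
    (μC : ℂ → ℂ)
    (hμC : ∀ z, μC z = ∑ c : Finset A,
      if (↑c : Set A).Pairwise I then (-1 : ℂ) ^ c.card * z ^ c.card else 0)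
    (r : ℝ) (hrpos : 0 < r) (hroot : μR r = 0)
    (hmin : ∀ s : ℝ, 0 < s → μR s = 0 → r ≤ s) :
    (∃ z : ℂ, μC z = 0 ∧ ‖z‖ ≤ 1) ∧
      (1 ≤ r ↔ ∀ a b : A, a ≠ b → I a b) := by
  have hμRmu : ∀ z : ℝ, μR z = muF I z Finset.univ := by
    intro z
    rw [hμR]
    unfold muF
    rw [Finset.powerset_univ]
  have hcast : ∀ x : ℝ, μC (x : ℂ) = ((μR x : ℝ) : ℂ) := by
    intro x
    rw [hμC, hμR]
    push_cast
    apply Finset.sum_congr rfl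
    intro c _
    by_cases h : (↑c : Set A).Pairwise I
    · rw [if_pos h, if_pos h]
      push_cast
      ring
    · rw [if_neg h, if_neg h]
      norm_num
  have hcard : Fintype.card A ≠ 0 := Fintype.card_ne_zero
  have hcomm_case : (∀ a b : A, a ≠ b → I a b) → r = 1 := by
    intro hcomm
    have hall : ∀ z : ℝ, μR z = (1 - z) ^ Fintype.card A := by
      intro z
      have h1 : μR z = ∑ c ∈ (Finset.univ : Finset A).powerset,
          (∏ _i ∈ c, (-z)) * ∏ _i ∈ (Finset.univ : Finset A) \ c, (1 : ℝ) := by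
        rw [hμR, Finset.powerset_univ]
        apply Finset.sum_congr rfl
        intro c _
        have hcl : (↑c : Set A).Pairwise I := fun x _ y _ hxy => hcomm x y hxy
        rw [if_pos hcl, Finset.prod_const, Finset.prod_const, one_pow, mul_one,
          ← neg_one_mul z, mul_pow]
      rw [h1, ← Finset.prod_add, Finset.prod_const, Finset.card_univ]
      congr 1
      ring
    have hr1 : r ≤ 1 := by
      refine hmin 1 one_pos ?_
      rw [hall]
      simp only [sub_self]
      exact zero_pow hcard
    have h0 : (1 - r) ^ Fintype.card A = 0 := by rw [← hall, hroot]
    have h1 : 1 - r = 0 := (pow_eq_zero_iff hcard).mp h0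
    linarith
  have hncomm_case : (¬ ∀ a b : A, a ≠ b → I a b) → r ≤ 1 / 2 := by
    intro h
    push_neg at h
    obtain ⟨a, b, hab, hnI⟩ := h
    obtain ⟨t, ht0, hth, htroot⟩ := muF_root hsym hab hnI
    have := hmin t ht0 (by rw [hμRmu]; exact htroot)
    linarith
  have hrle1 : r ≤ 1 := by
    by_cases h : ∀ a b : A, a ≠ b → I a b
    · exact le_of_eq (hcomm_case h)
    · linarith [hncomm_case h]
  refine ⟨⟨(r : ℂ), ?_, ?_⟩, ?_, ?_⟩
  · rw [hcast, hroot]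
    norm_num
  · rw [Complex.norm_real, Real.norm_eq_abs, abs_of_pos hrpos]
    exact hrle1
  · intro h1
    by_contra hnc
    have := hncomm_case hnc
    linarith
  · intro hcomm
    rw [hcomm_case hcomm]
end
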